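/- Let S be a finite set of points in general position, p ∈ S, and let A be the line arrangement spanned by all lines through pairs of points of S \ {p}. If q and q' are two points lying in the same open cell of A (and S \ {p} ∪ {q}, S \ {p} ∪ {q'} are in general position), then rcr(S \ {p} ∪ {q}) = rcr(S \ {p} ∪ {q'}). -/
import Mathlib


open Filter Set

noncomputable section

abbrev Pt : Type := ℝ × ℝ

/-- Signed area determinant of two vectors in the plane. -/
def det2 (u v : Pt) : ℝ := u.1 * v.2 - u.2 * v.1

/-- A finite point set is in general position if no three of its points are collinear. -/
def GenPos (S : Finset Pt) : Prop :=
  ∀ a ∈ S, ∀ b ∈ S, ∀ c ∈ S, a ≠ b → a ≠ c → b ≠ c →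
    ¬ Collinear ℝ ({a, b, c} : Set Pt)

/-- Two closed segments cross iff their relative interiors meet. -/
def SegCross (e f : Sym2 Pt) : Prop :=
  ∃ a b c d : Pt, e = s(a, b) ∧ f = s(c, d) ∧
    (openSegment ℝ a b ∩ openSegment ℝ c d).Nonempty

/-- `e` is an edge of the complete rectilinear drawing on `S`. -/
def IsEdgeOf (S : Finset Pt) (e : Sym2 Pt) : Prop :=
  ∃ a b : Pt, a ∈ S ∧ b ∈ S ∧ a ≠ b ∧ e = s(a, b)

/-- The number of pairs of edges that cross in the rectilinear drawing of the
complete graph with vertex set `S`. -/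
def rcrSet (S : Finset Pt) : ℕ :=
  Set.ncard { q : Sym2 (Sym2 Pt) | ∃ e f : Sym2 Pt,
    q = s(e, f) ∧ e ≠ f ∧ IsEdgeOf S e ∧ IsEdgeOf S f ∧ SegCross e f }

/-- The line through `a` with direction `v`. -/
def lineThrough (a v : Pt) : Set Pt := {x | det2 v (x - a) = 0}

/-- The union of all lines spanned by pairs of points of `S \ {p}`. -/
def arrangement (S : Finset Pt) (p : Pt) : Set Pt :=
  { x : Pt | ∃ a ∈ S.erase p, ∃ b ∈ S.erase p, a ≠ b ∧ x ∈ lineThrough a (b - a) }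

def o3 (a b c : Pt) : ℝ := det2 (b - a) (c - a)

lemma o3_cycle (a b c : Pt) : o3 a b c = o3 b c a := by
  simp only [o3, det2, Prod.fst_sub, Prod.snd_sub]; ring

lemma det2_self (u : Pt) : det2 u u = 0 := by simp only [det2]; ring

lemma exists_smul_of_det2_eq_zero {u v : Pt} (hu : u ≠ 0) (h : det2 u v = 0) :
    ∃ s : ℝ, v = s • u := by
  have h' : u.1 * v.2 - u.2 * v.1 = 0 := h
  rcases eq_or_ne u.1 0 with h1 | h1
  · have h2 : u.2 ≠ 0 := fun h2 => hu (Prod.ext h1 h2)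
    refine ⟨v.2 / u.2, Prod.ext ?_ ?_⟩
    · show v.1 = v.2 / u.2 * u.1
      rw [h1] at h' ⊢
      simp at h'
      rcases h' with h' | h'
      · exact absurd h' h2
      · simp [h']
    · show v.2 = v.2 / u.2 * u.2
      field_simp
  · refine ⟨v.1 / u.1, Prod.ext ?_ ?_⟩
    · show v.1 = v.1 / u.1 * u.1
      field_simp
    · show v.2 = v.1 / u.1 * u.2
      field_simp; nlinarith [h']

lemma collinear_of_o3_eq_zero {a b c : Pt} (h : o3 a b c = 0) :
    Collinear ℝ ({a, b, c} : Set Pt) := by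
  rcases eq_or_ne b a with heq | hba
  · subst heq
    refine Collinear.subset ?_ (collinear_pair ℝ b c)
    intro x hx
    rcases hx with rfl | rfl | rfl <;> simp
  · have hu : b - a ≠ 0 := sub_ne_zero.mpr hba
    obtain ⟨s, hs⟩ := exists_smul_of_det2_eq_zero hu h
    rw [collinear_iff_of_mem (Set.mem_insert a {b, c})]
    refine ⟨b - a, fun x hx => ?_⟩
    rcases hx with rfl | rfl | rfl
    · exact ⟨0, by simp⟩
    · exact ⟨1, by simp⟩
    · exact ⟨s, by rw [← hs]; simp⟩

lemma o3_affine (c d a b : Pt) (t : ℝ) :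
    o3 c d ((1 - t) • a + t • b) = (1 - t) * o3 c d a + t * o3 c d b := by
  simp only [o3, det2, Prod.fst_sub, Prod.snd_sub, Prod.fst_add, Prod.snd_add,
    Prod.smul_fst, Prod.smul_snd, smul_eq_mul]
  ring

lemma signs_of_param {A B t : ℝ} (hA : A ≠ 0) (ht0 : 0 < t) (ht1 : t < 1)
    (h : (1 - t) * A + t * B = 0) : A * B < 0 := by
  have key : t * (A * B) = -((1 - t) * A ^ 2) := by linear_combination A * h
  have hA2 : 0 < A ^ 2 := by positivity
  nlinarith [key]

lemma param_of_signs {A B : ℝ} (hAB : A * B < 0) :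
    0 < A / (A - B) ∧ A / (A - B) < 1 ∧ (1 - A / (A - B)) * A + (A / (A - B)) * B = 0 := by
  have hA : A ≠ 0 := by rintro rfl; simp at hAB
  have hB : B ≠ 0 := by rintro rfl; simp at hAB
  have hne : A - B ≠ 0 := by
    intro h0
    have : A = B := by linarith [sub_eq_zero.mp h0]
    rw [this] at hAB; nlinarith [sq_nonneg B]
  have heq : (1 - A / (A - B)) * A + (A / (A - B)) * B = 0 := by
    field_simp; ring
  rcases mul_neg_iff.mp hAB with ⟨hA', hB'⟩ | ⟨hA', hB'⟩
  · have hd : 0 < A - B := by linarith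
    exact ⟨div_pos hA' hd, (div_lt_one hd).mpr (by linarith), heq⟩
  · have hd : A - B < 0 := by linarith
    refine ⟨div_pos_of_neg_of_neg hA' hd, ?_, heq⟩
    rw [div_lt_one_iff]
    right; right; exact ⟨hd, by linarith⟩

lemma o3_self_left (c d : Pt) : o3 c d c = 0 := by
  simp only [o3, det2, Prod.fst_sub, Prod.snd_sub]; ring

lemma o3_self_right (c d : Pt) : o3 c d d = 0 := by
  simp only [o3, det2, Prod.fst_sub, Prod.snd_sub]; ring

lemma cross_iff {a b c d : Pt} (h1 : o3 a b c ≠ 0) (h2 : o3 a b d ≠ 0)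
    (h3 : o3 c d a ≠ 0) (h4 : o3 c d b ≠ 0) :
    (openSegment ℝ a b ∩ openSegment ℝ c d).Nonempty ↔
      o3 c d a * o3 c d b < 0 ∧ o3 a b c * o3 a b d < 0 := by
  constructor
  · rintro ⟨x, hxab, hxcd⟩
    rw [openSegment_eq_image] at hxab hxcd
    obtain ⟨t, ht, hxt⟩ := hxab
    obtain ⟨u, hu, hxu⟩ := hxcd
    have hxt' : (1 - t) • a + t • b = x := hxt
    have hxu' : (1 - u) • c + u • d = x := hxu
    have hcd0 : o3 c d x = 0 := by
      rw [← hxu', o3_affine, o3_self_left, o3_self_right]; ring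
    have hab0 : o3 a b x = 0 := by
      rw [← hxt', o3_affine, o3_self_left, o3_self_right]; ring
    constructor
    · have : (1 - t) * o3 c d a + t * o3 c d b = 0 := by
        rw [← o3_affine, hxt']; exact hcd0
      exact signs_of_param h3 ht.1 ht.2 this
    · have : (1 - u) * o3 a b c + u * o3 a b d = 0 := by
        rw [← o3_affine, hxu']; exact hab0
      exact signs_of_param h1 hu.1 hu.2 this
  · rintro ⟨hcd, hab⟩
    obtain ⟨ht0, ht1, hteq⟩ := param_of_signs hcd
    set t := o3 c d a / (o3 c d a - o3 c d b) with htdef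
    set x := (1 - t) • a + t • b with hxdef
    have hxab : x ∈ openSegment ℝ a b := by
      rw [openSegment_eq_image]; exact ⟨t, ⟨ht0, ht1⟩, rfl⟩
    have hx0 : o3 c d x = 0 := by rw [hxdef, o3_affine]; exact hteq
    have hdc : d - c ≠ 0 := by
      intro h0
      apply h3
      simp only [o3, det2, h0]
      simp
    obtain ⟨u, hu⟩ := exists_smul_of_det2_eq_zero hdc hx0
    have hxu : x = (1 - u) • c + u • d := by
      have : x - c = u • (d - c) := hu
      have hx : x = c + u • (d - c) := by
        rw [← this]; abel
      rw [hx, smul_sub]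
      module
    have hab0 : o3 a b x = 0 := by
      have hxa : x - a = t • (b - a) := by
        rw [hxdef]; module
      simp only [o3, hxa, det2, Prod.smul_fst, Prod.smul_snd, smul_eq_mul,
        Prod.fst_sub, Prod.snd_sub]
      ring
    have haff : (1 - u) * o3 a b c + u * o3 a b d = 0 := by
      rw [← o3_affine, ← hxu]; exact hab0
    obtain ⟨hu0, hu1, hueq⟩ := param_of_signs hab
    have huval : u = o3 a b c / (o3 a b c - o3 a b d) := by
      have hne : o3 a b c - o3 a b d ≠ 0 := by
        intro h0
        have : o3 a b c = o3 a b d := by linarith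
        rw [this] at hab; nlinarith [sq_nonneg (o3 a b d)]
      rw [eq_div_iff hne]
      linarith [haff]
    refine ⟨x, hxab, ?_⟩
    rw [openSegment_eq_image]
    exact ⟨u, ⟨by rw [huval]; exact hu0, by rw [huval]; exact hu1⟩, hxu.symm⟩

lemma segCross_pair_iff {a b c d : Pt} :
    SegCross s(a, b) s(c, d) ↔ (openSegment ℝ a b ∩ openSegment ℝ c d).Nonempty := by
  constructor
  · rintro ⟨a', b', c', d', he, hf, hne⟩
    rw [Sym2.eq_iff] at he hf
    rcases he with ⟨rfl, rfl⟩ | ⟨rfl, rfl⟩ <;> rcases hf with ⟨rfl, rfl⟩ | ⟨rfl, rfl⟩ <;>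
      first
        | exact hne
        | (rw [openSegment_symm ℝ d c] at hne; exact hne)
        | (rw [openSegment_symm ℝ b a] at hne; exact hne)
        | (rw [openSegment_symm ℝ b a, openSegment_symm ℝ d c] at hne; exact hne)
  · intro h; exact ⟨a, b, c, d, rfl, rfl, h⟩

/-- open segments sharing an endpoint intersect only if collinear -/
lemma collinear_of_shared {a b d : Pt}
    (h : (openSegment ℝ a b ∩ openSegment ℝ a d).Nonempty) :
    Collinear ℝ ({a, b, d} : Set Pt) := by
  apply collinear_of_o3_eq_zero
  obtain ⟨x, hx1, hx2⟩ := h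
  rw [openSegment_eq_image] at hx1 hx2
  obtain ⟨t, ht, hxt⟩ := hx1
  obtain ⟨u, hu, hxu⟩ := hx2
  have hxt' : (1 - t) • a + t • b = x := hxt
  have hxu' : (1 - u) • a + u • d = x := hxu
  have e := hxt'.trans hxu'.symm
  have e1 := congrArg Prod.fst e
  have e2 := congrArg Prod.snd e
  simp only [Prod.fst_add, Prod.snd_add, Prod.smul_fst, Prod.smul_snd, smul_eq_mul] at e1 e2
  have h1 : t * (b.1 - a.1) = u * (d.1 - a.1) := by linear_combination e1
  have h2 : t * (b.2 - a.2) = u * (d.2 - a.2) := by linear_combination e2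
  have h3 : t ^ 2 * ((b.1 - a.1) * (d.2 - a.2) - (b.2 - a.2) * (d.1 - a.1)) = 0 := by
    linear_combination (t * (d.2 - a.2)) * h1 - (t * (d.1 - a.1)) * h2
  have ht2 : (t : ℝ) ^ 2 ≠ 0 := pow_ne_zero 2 (ne_of_gt ht.1)
  have := mul_eq_zero.mp h3
  rcases this with h' | h'
  · exact absurd h' ht2
  · exact h'

lemma rcr_small {T : Finset Pt} (hT : T.card ≤ 2) : rcrSet T = 0 := by
  have : { q : Sym2 (Sym2 Pt) | ∃ e f : Sym2 Pt,
      q = s(e, f) ∧ e ≠ f ∧ IsEdgeOf T e ∧ IsEdgeOf T f ∧ SegCross e f } = ∅ := by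
    ext Q
    simp only [Set.mem_setOf_eq, Set.mem_empty_iff_false, iff_false]
    rintro ⟨e, f, rfl, hef, ⟨a, b, ha, hb, hab, rfl⟩, ⟨c, d, hc, hd, hcd, rfl⟩, -⟩
    apply hef
    have hTeq : ({a, b} : Finset Pt) = T := by
      apply Finset.eq_of_subset_of_card_le
      · intro x hx
        rcases Finset.mem_insert.mp hx with rfl | hx
        · exact ha
        · rw [Finset.mem_singleton] at hx; subst hx; exact hb
      · rwa [Finset.card_pair hab]
    have hc' : c ∈ ({a, b} : Finset Pt) := hTeq ▸ hc
    have hd' : d ∈ ({a, b} : Finset Pt) := hTeq ▸ hd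
    simp only [Finset.mem_insert, Finset.mem_singleton] at hc' hd'
    rw [Sym2.eq_iff]
    rcases hc' with rfl | rfl <;> rcases hd' with rfl | rfl
    · exact absurd rfl hcd
    · left; exact ⟨rfl, rfl⟩
    · right; exact ⟨rfl, rfl⟩
    · exact absurd rfl hcd
  rw [rcrSet, this, Set.ncard_empty]

lemma sign_invariant (S : Finset Pt) (p : Pt) {q q' : Pt}
    (hq : q ∈ (arrangement S p)ᶜ) (hq' : q' ∈ (arrangement S p)ᶜ)
    (hcell : connectedComponentIn (arrangement S p)ᶜ q =
      connectedComponentIn (arrangement S p)ᶜ q')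
    {a b : Pt} (ha : a ∈ S.erase p) (hb : b ∈ S.erase p) (hab : a ≠ b) :
    0 < o3 a b q * o3 a b q' := by
  set C := connectedComponentIn (arrangement S p)ᶜ q with hC
  have hqC : q ∈ C := mem_connectedComponentIn hq
  have hq'C : q' ∈ C := by rw [hcell]; exact mem_connectedComponentIn hq'
  have hsub : C ⊆ (arrangement S p)ᶜ := connectedComponentIn_subset _ _
  have hconn : IsPreconnected C :=
    (isConnected_connectedComponentIn_iff.mpr hq).isPreconnected
  set f : Pt → ℝ := fun x => o3 a b x with hfdef
  have hf : Continuous f := by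
    have : f = fun x : Pt => (b.1 - a.1) * (x.2 - a.2) - (b.2 - a.2) * (x.1 - a.1) := by
      funext x; simp [hfdef, o3, det2]
    rw [this]; fun_prop
  have hne : ∀ x ∈ C, f x ≠ 0 := by
    intro x hxC hfx
    exact hsub hxC ⟨a, ha, b, hb, hab, hfx⟩
  have hIV := hconn.intermediate_value hqC hq'C hf.continuousOn
  have hIV' := hconn.intermediate_value hq'C hqC hf.continuousOn
  have hqne := hne q hqC
  have hq'ne := hne q' hq'C
  rcases lt_or_gt_of_ne hqne with h1 | h1 <;> rcases lt_or_gt_of_ne hq'ne with h2 | h2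
  · exact mul_pos_of_neg_of_neg h1 h2
  · exfalso
    obtain ⟨x, hxC, hfx⟩ := hIV ⟨le_of_lt h1, le_of_lt h2⟩
    exact hne x hxC hfx
  · exfalso
    obtain ⟨x, hxC, hfx⟩ := hIV' ⟨le_of_lt h2, le_of_lt h1⟩
    exact hne x hxC hfx
  · exact mul_pos h1 h2

lemma swap_cases {T : Finset Pt} {q q' : Pt} (hqT : q ∉ T) (hq'T : q' ∉ T)
    (hqq' : q ≠ q') {x : Pt} (hx : x ∈ insert q T) :
    (x = q ∧ Equiv.swap q q' x = q') ∨ (x ∈ T ∧ Equiv.swap q q' x = x) := by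
  rcases Finset.mem_insert.mp hx with rfl | hxT
  · exact Or.inl ⟨rfl, Equiv.swap_apply_left _ _⟩
  · refine Or.inr ⟨hxT, Equiv.swap_apply_of_ne_of_ne ?_ ?_⟩
    · rintro rfl; exact hqT hxT
    · rintro rfl; exact hq'T hxT

lemma sign_pres {T : Finset Pt} {q q' : Pt} (hqT : q ∉ T) (hq'T : q' ∉ T) (hqq' : q ≠ q')
    (hsgn : ∀ a ∈ T, ∀ b ∈ T, a ≠ b → 0 < o3 a b q * o3 a b q')
    {x y z : Pt} (hx : x ∈ insert q T) (hy : y ∈ insert q T) (hz : z ∈ insert q T)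
    (hxy : x ≠ y) (hxz : x ≠ z) (hyz : y ≠ z) (ho : o3 x y z ≠ 0) :
    0 < o3 x y z * o3 (Equiv.swap q q' x) (Equiv.swap q q' y) (Equiv.swap q q' z) := by
  rcases swap_cases hqT hq'T hqq' hx with ⟨hx', ex⟩ | ⟨hxT, ex⟩ <;>
    rcases swap_cases hqT hq'T hqq' hy with ⟨hy', ey⟩ | ⟨hyT, ey⟩ <;>
    rcases swap_cases hqT hq'T hqq' hz with ⟨hz', ez⟩ | ⟨hzT, ez⟩
  · exact absurd (hx'.trans hy'.symm) hxy
  · exact absurd (hx'.trans hy'.symm) hxy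
  · exact absurd (hx'.trans hz'.symm) hxz
  · rw [ex, ey, ez, hx', o3_cycle q y z, o3_cycle q' y z]
    exact hsgn y hyT z hzT hyz
  · exact absurd (hy'.trans hz'.symm) hyz
  · rw [ex, ey, ez, hy', (o3_cycle x q z).trans (o3_cycle q z x),
      (o3_cycle x q' z).trans (o3_cycle q' z x)]
    exact hsgn z hzT x hxT (Ne.symm hxz)
  · rw [ex, ey, ez, hz']
    exact hsgn x hxT y hyT hxy
  · rw [ex, ey, ez]
    exact mul_self_pos.mpr ho

def crossPairs (U : Finset Pt) : Set (Sym2 (Sym2 Pt)) :=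
  { Q | ∃ e f : Sym2 Pt, Q = s(e, f) ∧ e ≠ f ∧ IsEdgeOf U e ∧ IsEdgeOf U f ∧ SegCross e f }

lemma rcrSet_eq (U : Finset Pt) : rcrSet U = (crossPairs U).ncard := rfl

lemma forward_lemma {T : Finset Pt} {q q' : Pt} (hqT : q ∉ T) (hq'T : q' ∉ T)
    (hqq' : q ≠ q') (hgp1 : GenPos (insert q T))
    (hsgn : ∀ a ∈ T, ∀ b ∈ T, a ≠ b → 0 < o3 a b q * o3 a b q') :
    (Sym2.map (Sym2.map (Equiv.swap q q'))) '' crossPairs (insert q T) ⊆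
      crossPairs (insert q' T) := by
  set σ : Pt → Pt := ⇑(Equiv.swap q q') with hσ
  rintro Q ⟨Q₀, ⟨e, f, rfl, hef, ⟨a, b, ha, hb, hab, rfl⟩, ⟨c, d, hc, hd, hcd, rfl⟩, hcross⟩, rfl⟩
  -- membership of images
  have hmem : ∀ x : Pt, x ∈ insert q T → σ x ∈ insert q' T := by
    intro x hx
    rcases swap_cases hqT hq'T hqq' hx with ⟨_, ex⟩ | ⟨hxT, ex⟩
    · simp only [hσ]; rw [ex]; exact Finset.mem_insert_self _ _
    · simp only [hσ]; rw [ex]; exact Finset.mem_insert_of_mem hxT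
  have hinj : Function.Injective σ := (Equiv.swap q q').injective
  -- segments intersect
  have hne : (openSegment ℝ a b ∩ openSegment ℝ c d).Nonempty :=
    segCross_pair_iff.mp hcross
  -- four points pairwise distinct
  have hac : a ≠ c := by
    intro h
    have had' : a ≠ d := fun h2 => hcd (h.symm.trans h2)
    have hbd' : b ≠ d := fun h2 => hef (by rw [h, h2])
    rw [← h] at hne
    exact hgp1 a ha b hb d hd hab had' hbd' (collinear_of_shared hne)
  have hbd : b ≠ d := by
    intro h
    have hac' : a ≠ c := fun h2 => hef (by rw [h2, h])
    have hbc' : b ≠ c := fun h2 => hcd (h2.symm.trans h)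
    rw [← h, openSegment_symm ℝ a b, openSegment_symm ℝ c b] at hne
    exact hgp1 b hb a ha c hc (Ne.symm hab) hbc' hac' (collinear_of_shared hne)
  have had : a ≠ d := by
    intro h
    have hac' : a ≠ c := fun h2 => hcd (h2.symm.trans h)
    have hbc' : b ≠ c := fun h2 => hef (by rw [h2, h, Sym2.eq_swap])
    rw [← h, openSegment_symm ℝ c a] at hne
    exact hgp1 a ha b hb c hc hab hac' hbc' (collinear_of_shared hne)
  have hbc : b ≠ c := by
    intro h
    have hbd' : b ≠ d := fun h2 => hcd (h.symm.trans h2)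
    have had' : a ≠ d := fun h2 => hef (by rw [h2, h, Sym2.eq_swap])
    rw [← h, openSegment_symm ℝ a b] at hne
    exact hgp1 b hb a ha d hd (Ne.symm hab) hbd' had' (collinear_of_shared hne)
  -- noncollinearity: o3 values nonzero
  have ho3 : ∀ x y z : Pt, x ∈ insert q T → y ∈ insert q T → z ∈ insert q T →
      x ≠ y → x ≠ z → y ≠ z → o3 x y z ≠ 0 := by
    intro x y z hx hy hz h1 h2 h3 h0
    exact hgp1 x hx y hy z hz h1 h2 h3 (collinear_of_o3_eq_zero h0)
  have h1 := ho3 a b c ha hb hc hab hac hbc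
  have h2 := ho3 a b d ha hb hd hab had hbd
  have h3 := ho3 c d a hc hd ha hcd (Ne.symm hac) (Ne.symm had)
  have h4 := ho3 c d b hc hd hb hcd (Ne.symm hbc) (Ne.symm hbd)
  obtain ⟨scd, sab⟩ := (cross_iff h1 h2 h3 h4).mp hne
  -- sign preservation
  have p1 := sign_pres hqT hq'T hqq' hsgn ha hb hc hab hac hbc h1
  have p2 := sign_pres hqT hq'T hqq' hsgn ha hb hd hab had hbd h2
  have p3 := sign_pres hqT hq'T hqq' hsgn hc hd ha hcd (Ne.symm hac) (Ne.symm had) h3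
  have p4 := sign_pres hqT hq'T hqq' hsgn hc hd hb hcd (Ne.symm hbc) (Ne.symm hbd) h4
  have scd' : o3 (σ c) (σ d) (σ a) * o3 (σ c) (σ d) (σ b) < 0 := by nlinarith
  have sab' : o3 (σ a) (σ b) (σ c) * o3 (σ a) (σ b) (σ d) < 0 := by nlinarith
  have h1' : o3 (σ a) (σ b) (σ c) ≠ 0 := by intro h0; rw [h0] at p1; simp at p1
  have h2' : o3 (σ a) (σ b) (σ d) ≠ 0 := by intro h0; rw [h0] at p2; simp at p2
  have h3' : o3 (σ c) (σ d) (σ a) ≠ 0 := by intro h0; rw [h0] at p3; simp at p3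
  have h4' : o3 (σ c) (σ d) (σ b) ≠ 0 := by intro h0; rw [h0] at p4; simp at p4
  have hne' : (openSegment ℝ (σ a) (σ b) ∩ openSegment ℝ (σ c) (σ d)).Nonempty :=
    (cross_iff h1' h2' h3' h4').mpr ⟨scd', sab'⟩
  refine ⟨s(σ a, σ b), s(σ c, σ d), ?_, ?_, ?_, ?_, ?_⟩
  · rw [Sym2.map_pair_eq, Sym2.map_pair_eq, Sym2.map_pair_eq]
  · intro h
    apply hef
    have := Sym2.map.injective hinj (a₁ := s(a, b)) (a₂ := s(c, d))
    rw [Sym2.map_pair_eq, Sym2.map_pair_eq] at this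
    exact this h
  · exact ⟨σ a, σ b, hmem a ha, hmem b hb, fun h => hab (hinj h), rfl⟩
  · exact ⟨σ c, σ d, hmem c hc, hmem d hd, fun h => hcd (hinj h), rfl⟩
  · exact segCross_pair_iff.mpr hne'

/-- If `q` and `q'` lie in the same open cell of the arrangement of lines
spanned by `S \ {p}`, then replacing `p` by `q` or by `q'` yields the same
number of crossings. -/
theorem same_cell_same_crossings (S : Finset Pt) (hgp : GenPos S)
    (p : Pt) (hp : p ∈ S) (q q' : Pt)
    (hq : q ∈ (arrangement S p)ᶜ) (hq' : q' ∈ (arrangement S p)ᶜ)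
    (hcell : connectedComponentIn (arrangement S p)ᶜ q =
      connectedComponentIn (arrangement S p)ᶜ q')
    (hgpq : GenPos (insert q (S.erase p)))
    (hgpq' : GenPos (insert q' (S.erase p))) :
    rcrSet (insert q (S.erase p)) = rcrSet (insert q' (S.erase p)) := by
  rcases eq_or_ne q q' with rfl | hqq'
  · rfl
  rcases le_or_gt (S.erase p).card 1 with hsmall | hbig
  · rw [rcr_small (le_trans (Finset.card_insert_le _ _) (by omega)),
      rcr_small (le_trans (Finset.card_insert_le _ _) (by omega))]
  · have hmemarr : ∀ x ∈ S.erase p, x ∈ arrangement S p := by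
      intro x hx
      obtain ⟨y, hy, hyx⟩ := Finset.exists_mem_ne hbig x
      refine ⟨x, hx, y, hy, Ne.symm hyx, ?_⟩
      show det2 (y - x) (x - x) = 0
      simp [det2]
    have hqT : q ∉ S.erase p := fun h => hq (hmemarr q h)
    have hq'T : q' ∉ S.erase p := fun h => hq' (hmemarr q' h)
    have hsgn : ∀ a ∈ S.erase p, ∀ b ∈ S.erase p, a ≠ b → 0 < o3 a b q * o3 a b q' :=
      fun a ha b hb hab => sign_invariant S p hq hq' hcell ha hb hab
    have hsgn' : ∀ a ∈ S.erase p, ∀ b ∈ S.erase p, a ≠ b → 0 < o3 a b q' * o3 a b q :=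
      fun a ha b hb hab => by rw [mul_comm]; exact hsgn a ha b hb hab
    have hswap : Equiv.swap q' q = Equiv.swap q q' := Equiv.swap_comm q' q
    have hσσ : ⇑(Equiv.swap q q') ∘ ⇑(Equiv.swap q q') = id :=
      funext fun x => Equiv.swap_apply_self q q' x
    have hFF : ∀ z : Sym2 (Sym2 Pt),
        Sym2.map (Sym2.map ⇑(Equiv.swap q q')) (Sym2.map (Sym2.map ⇑(Equiv.swap q q')) z) = z := by
      intro z
      rw [Sym2.map_map]
      have h1 : (Sym2.map ⇑(Equiv.swap q q')) ∘ (Sym2.map ⇑(Equiv.swap q q')) = id := by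
        funext w
        show Sym2.map ⇑(Equiv.swap q q') (Sym2.map ⇑(Equiv.swap q q') w) = id w
        rw [Sym2.map_map, hσσ, Sym2.map_id]
      rw [h1, Sym2.map_id, id_eq]
    have fwd := forward_lemma hqT hq'T hqq' hgpq hsgn
    have bwd := forward_lemma hq'T hqT (Ne.symm hqq') hgpq' hsgn'
    have himg : Sym2.map (Sym2.map ⇑(Equiv.swap q q')) '' crossPairs (insert q (S.erase p)) =
        crossPairs (insert q' (S.erase p)) := by
      apply Set.Subset.antisymm fwd
      intro Q hQ
      have hQ' : Sym2.map (Sym2.map ⇑(Equiv.swap q q')) Q ∈ crossPairs (insert q (S.erase p)) := by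
        have h := bwd ⟨Q, hQ, rfl⟩
        rwa [hswap] at h
      exact ⟨_, hQ', hFF Q⟩
    rw [rcrSet_eq, rcrSet_eq, ← himg,
      Set.ncard_image_of_injective _ (Sym2.map.injective (Sym2.map.injective
        (Equiv.swap q q').injective))]
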